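/- For n ≥ 3, if α and β are partial isometries of C_n with |Dom(α)| = |Dom(β)| = 2, writing Dom(α) = {i₁, i₂} and Dom(β) = {i₁', i₂'}, then α and β are J-related in DPC_n if and only if d(i₁, i₂) = d(i₁', i₂'). -/
import Mathlib


/-- Geodesic distance on the cycle graph `C_n` with vertices `{1,...,n}`:
`d(x,y) = min (|x-y|, n-|x-y|)`. -/
def cdist (n x y : ℕ) : ℕ := min ((x : ℤ) - y).natAbs (n - ((x : ℤ) - y).natAbs)

/-- The n-cycle permutation `g` of `{1,...,n}`: `i ↦ i+1 (mod n)`. -/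
def gfun (n i : ℕ) : ℕ := if i < n then i + 1 else 1

/-- The reversal permutation `h` of `{1,...,n}`: `i ↦ n-i+1`. -/
def hfun (n i : ℕ) : ℕ := n - i + 1

/-- Left-to-right composition of partial maps (apply `f`, then `g`). -/
def pcomp (f g : ℕ → Option ℕ) : ℕ → Option ℕ := fun x => (f x).bind g

/-- The partial identity on `{1,...,n}`. -/
def pid (n : ℕ) : ℕ → Option ℕ := fun i => if i ∈ Finset.Icc 1 n then some i else none

/-- `g` as a partial map with domain `{1,...,n}`. -/
def gmap (n : ℕ) : ℕ → Option ℕ := fun i => if i ∈ Finset.Icc 1 n then some (gfun n i) else none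

/-- `h` as a partial map with domain `{1,...,n}`. -/
def hmap (n : ℕ) : ℕ → Option ℕ := fun i => if i ∈ Finset.Icc 1 n then some (hfun n i) else none

/-- `e_j`: the partial identity with domain `{1,...,n} \ {j}`. -/
def emap (n j : ℕ) : ℕ → Option ℕ := fun i => if i ∈ Finset.Icc 1 n ∧ i ≠ j then some i else none

/-- `k`-th power of a partial map (with identity `pid n`). -/
def ppow (n : ℕ) (f : ℕ → Option ℕ) : ℕ → (ℕ → Option ℕ)
  | 0 => pid n
  | k + 1 => pcomp f (ppow n f k)

/-- `f` is a partial isometry of the cycle graph `C_n`: a partial injective map on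
`{1,...,n}` preserving the cycle distance. -/
def PIso (n : ℕ) (f : ℕ → Option ℕ) : Prop :=
  (∀ x y, f x = some y → x ∈ Finset.Icc 1 n ∧ y ∈ Finset.Icc 1 n) ∧
  (∀ x y z, f x = some z → f y = some z → x = y) ∧
  (∀ x y x' y', f x = some x' → f y = some y' → cdist n x' y' = cdist n x y)

/-- Domain of a partial map, as a set. -/
def DomS (f : ℕ → Option ℕ) : Set ℕ := {x | (f x).isSome}

/-- Image of a partial map, as a set. -/
def ImS (f : ℕ → Option ℕ) : Set ℕ := {y | ∃ x, f x = some y}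

/-- Domain of a partial map on `{1,...,n}`, as a finset. -/
def domF (n : ℕ) (f : ℕ → Option ℕ) : Finset ℕ :=
  (Finset.Icc 1 n).filter (fun x => (f x).isSome)

/-- The dihedral group `D_{2n}` as the set of the permutations `g^k` and `h·g^k`
(acting on the right, so `h·g^k` applies `h` first) of `{1,...,n}`, `0 ≤ k ≤ n-1`. -/
def Dih (n : ℕ) : Set (ℕ → ℕ) :=
  {σ | ∃ k < n, σ = (gfun n)^[k] ∨ σ = fun i => (gfun n)^[k] (hfun n i)}

/-- `σ` extends the partial map `f`. -/
def Extends (σ : ℕ → ℕ) (f : ℕ → Option ℕ) : Prop := ∀ x y, f x = some y → σ x = y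

lemma cdist_comm (n x y : ℕ) : cdist n x y = cdist n y x := by
  have h : ((x:ℤ) - y).natAbs = ((y:ℤ) - x).natAbs := by omega
  unfold cdist; rw [h]

lemma cdist_self (n x : ℕ) : cdist n x x = 0 := by simp [cdist]

lemma pcomp_some {f g : ℕ → Option ℕ} {x y : ℕ} (h : pcomp f g x = some y) :
    ∃ z, f x = some z ∧ g z = some y := by
  unfold pcomp at h
  cases hf : f x with
  | none => rw [hf] at h; simp at h
  | some z => rw [hf] at h; exact ⟨z, rfl, h⟩

lemma PIso_pcomp {n : ℕ} {f g : ℕ → Option ℕ} (hf : PIso n f) (hg : PIso n g) :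
    PIso n (pcomp f g) := by
  refine ⟨?_, ?_, ?_⟩
  · intro x y h
    obtain ⟨z, hz, hgz⟩ := pcomp_some h
    exact ⟨(hf.1 x z hz).1, (hg.1 z y hgz).2⟩
  · intro x y z hx hy
    obtain ⟨u, hu, hgu⟩ := pcomp_some hx
    obtain ⟨v, hv, hgv⟩ := pcomp_some hy
    have huv := hg.2.1 u v z hgu hgv
    subst huv
    exact hf.2.1 x y u hu hv
  · intro x y x' y' hx hy
    obtain ⟨u, hu, hgu⟩ := pcomp_some hx
    obtain ⟨v, hv, hgv⟩ := pcomp_some hy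
    rw [hg.2.2 u v x' y' hgu hgv, hf.2.2 x y u v hu hv]

lemma pcomp_assoc (f g h : ℕ → Option ℕ) :
    pcomp (pcomp f g) h = pcomp f (pcomp g h) := by
  funext x; unfold pcomp; cases f x <;> simp

lemma PIso_pid (n : ℕ) : PIso n (pid n) := by
  refine ⟨?_, ?_, ?_⟩
  · intro x y h
    unfold pid at h
    split_ifs at h with hx
    · simp only [Option.some.injEq] at h; subst h; exact ⟨hx, hx⟩
  · intro x y z hx hy
    unfold pid at hx hy
    split_ifs at hx hy <;> simp_all
  · intro x y x' y' hx hy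
    unfold pid at hx hy
    split_ifs at hx hy <;> simp_all

lemma pid_comp {n : ℕ} {f : ℕ → Option ℕ} (hf : PIso n f) :
    pcomp (pid n) (pcomp f (pid n)) = f := by
  funext x
  by_cases hx : x ∈ Finset.Icc 1 n
  · cases hfx : f x with
    | none => simp [pcomp, pid, hx, hfx]
    | some y => simp [pcomp, pid, hx, hfx, Finset.mem_Icc.mp (hf.1 x y hfx).2]
  · have hfx : f x = none := by
      cases hfx : f x with
      | none => rfl
      | some y => exact absurd (hf.1 x y hfx).1 hx
    simp [pcomp, pid, hx, hfx]

/-- Partial map with two-point domain: `p1 ↦ q1`, `p2 ↦ q2`. -/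
def pmap2 (p1 q1 p2 q2 : ℕ) : ℕ → Option ℕ :=
  fun x => if x = p1 then some q1 else if x = p2 then some q2 else none

lemma PIso_pmap2 {n p1 q1 p2 q2 : ℕ}
    (hp1 : p1 ∈ Finset.Icc 1 n) (hq1 : q1 ∈ Finset.Icc 1 n)
    (hp2 : p2 ∈ Finset.Icc 1 n) (hq2 : q2 ∈ Finset.Icc 1 n)
    (hp : p1 ≠ p2) (hq : q1 ≠ q2)
    (hd : cdist n q1 q2 = cdist n p1 p2) :
    PIso n (pmap2 p1 q1 p2 q2) := by
  have hd' : cdist n q2 q1 = cdist n p2 p1 := by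
    rw [cdist_comm n q2, cdist_comm n p2]; exact hd
  refine ⟨?_, ?_, ?_⟩
  · intro x y h
    unfold pmap2 at h
    split_ifs at h with h1 h2
    · simp only [Option.some.injEq] at h; subst h; subst h1; exact ⟨hp1, hq1⟩
    · simp only [Option.some.injEq] at h; subst h; subst h2; exact ⟨hp2, hq2⟩
  · intro x y z hx hy
    unfold pmap2 at hx hy
    split_ifs at hx hy <;> simp_all
  · intro x y x' y' hx hy
    unfold pmap2 at hx hy
    split_ifs at hx hy <;> simp_all [cdist_self]

lemma conj_eq {a b : ℕ → Option ℕ} {i1 i2 i1' i2' j1 j2 j1' j2' : ℕ}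
    (h12' : i1' ≠ i2') (hj : j1 ≠ j2)
    (ha1 : a i1 = some j1) (ha2 : a i2 = some j2)
    (hb1 : b i1' = some j1') (hb2 : b i2' = some j2')
    (hdb : DomS b = {i1', i2'}) :
    pcomp (pmap2 i1' i1 i2' i2) (pcomp a (pmap2 j1 j1' j2 j2')) = b := by
  funext x
  by_cases hx1 : x = i1'
  · subst hx1
    rw [hb1]
    simp [pcomp, pmap2, ha1]
  · by_cases hx2 : x = i2'
    · subst hx2
      rw [hb2]
      simp [pcomp, pmap2, ha2, h12'.symm, hj.symm]
    · have hxd : x ∉ DomS b := by rw [hdb]; simp [hx1, hx2]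
      have hbx : b x = none := by
        cases hbx : b x with
        | none => rfl
        | some y =>
          exact absurd (Option.isSome_iff_exists.mpr ⟨y, hbx⟩) hxd
      rw [hbx]
      simp [pcomp, pmap2, hx1, hx2]

/-- two partial isometries of `C_n` with two-element domains `{i₁,i₂}` and
`{i₁',i₂'}` are J-related in `DPC_n` (equal principal two-sided ideals) iff
`d(i₁,i₂) = d(i₁',i₂')`. -/
theorem stmt_19 (n : ℕ) (hn : 3 ≤ n) (a b : ℕ → Option ℕ)
    (ha : PIso n a) (hb : PIso n b) (i1 i2 i1' i2' : ℕ)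
    (h12 : i1 ≠ i2) (h12' : i1' ≠ i2')
    (hda : DomS a = {i1, i2}) (hdb : DomS b = {i1', i2'}) :
    {x | ∃ c d, PIso n c ∧ PIso n d ∧ pcomp c (pcomp a d) = x} =
      {x | ∃ c d, PIso n c ∧ PIso n d ∧ pcomp c (pcomp b d) = x} ↔
    cdist n i1 i2 = cdist n i1' i2' := by
  -- extract images
  have hm1 : i1 ∈ DomS a := by rw [hda]; exact Set.mem_insert _ _
  have hm2 : i2 ∈ DomS a := by rw [hda]; exact Set.mem_insert_of_mem _ rfl
  have hm1' : i1' ∈ DomS b := by rw [hdb]; exact Set.mem_insert _ _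
  have hm2' : i2' ∈ DomS b := by rw [hdb]; exact Set.mem_insert_of_mem _ rfl
  obtain ⟨j1, ha1⟩ := Option.isSome_iff_exists.mp hm1
  obtain ⟨j2, ha2⟩ := Option.isSome_iff_exists.mp hm2
  obtain ⟨j1', hb1⟩ := Option.isSome_iff_exists.mp hm1'
  obtain ⟨j2', hb2⟩ := Option.isSome_iff_exists.mp hm2'
  have hj : j1 ≠ j2 := fun h => h12 (ha.2.1 i1 i2 j1 ha1 (h ▸ ha2))
  have hj' : j1' ≠ j2' := fun h => h12' (hb.2.1 i1' i2' j1' hb1 (h ▸ hb2))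
  have hdj : cdist n j1 j2 = cdist n i1 i2 := ha.2.2 i1 i2 j1 j2 ha1 ha2
  have hdj' : cdist n j1' j2' = cdist n i1' i2' := hb.2.2 i1' i2' j1' j2' hb1 hb2
  constructor
  · -- forward: equal ideals → equal distances
    intro hset
    have hbA : b ∈ {x | ∃ c d, PIso n c ∧ PIso n d ∧ pcomp c (pcomp a d) = x} := by
      rw [hset]
      exact ⟨pid n, pid n, PIso_pid n, PIso_pid n, pid_comp hb⟩
    obtain ⟨c, d, hc, hd, hcd⟩ := hbA
    have h1 : pcomp c (pcomp a d) i1' = some j1' := by rw [hcd]; exact hb1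
    have h2 : pcomp c (pcomp a d) i2' = some j2' := by rw [hcd]; exact hb2
    obtain ⟨u1, hcu1, hr1⟩ := pcomp_some h1
    obtain ⟨u2, hcu2, hr2⟩ := pcomp_some h2
    obtain ⟨v1, hav1, -⟩ := pcomp_some hr1
    obtain ⟨v2, hav2, -⟩ := pcomp_some hr2
    have hne : u1 ≠ u2 := fun h => h12' (hc.2.1 i1' i2' u1 hcu1 (h ▸ hcu2))
    have key : cdist n u1 u2 = cdist n i1' i2' := hc.2.2 i1' i2' u1 u2 hcu1 hcu2
    have hu1 : u1 = i1 ∨ u1 = i2 := by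
      have : u1 ∈ DomS a := Option.isSome_iff_exists.mpr ⟨v1, hav1⟩
      rw [hda] at this; simpa using this
    have hu2 : u2 = i1 ∨ u2 = i2 := by
      have : u2 ∈ DomS a := Option.isSome_iff_exists.mpr ⟨v2, hav2⟩
      rw [hda] at this; simpa using this
    rcases hu1 with rfl | rfl <;> rcases hu2 with rfl | rfl
    · exact absurd rfl hne
    · exact key
    · rw [cdist_comm n u1 u2] at key; exact key
    · exact absurd rfl hne
  · -- backward: equal distances → equal ideals
    intro hdeq
    -- memberships in Icc
    have hI1 := (ha.1 i1 j1 ha1).1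
    have hJ1 := (ha.1 i1 j1 ha1).2
    have hI2 := (ha.1 i2 j2 ha2).1
    have hJ2 := (ha.1 i2 j2 ha2).2
    have hI1' := (hb.1 i1' j1' hb1).1
    have hJ1' := (hb.1 i1' j1' hb1).2
    have hI2' := (hb.1 i2' j2' hb2).1
    have hJ2' := (hb.1 i2' j2' hb2).2
    have hba : pcomp (pmap2 i1' i1 i2' i2) (pcomp a (pmap2 j1 j1' j2 j2')) = b :=
      conj_eq h12' hj ha1 ha2 hb1 hb2 hdb
    have hab : pcomp (pmap2 i1 i1' i2 i2') (pcomp b (pmap2 j1' j1 j2' j2)) = a :=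
      conj_eq h12 hj' hb1 hb2 ha1 ha2 hda
    have hP1 : PIso n (pmap2 i1' i1 i2' i2) :=
      PIso_pmap2 hI1' hI1 hI2' hI2 h12' h12 hdeq
    have hP2 : PIso n (pmap2 j1 j1' j2 j2') :=
      PIso_pmap2 hJ1 hJ1' hJ2 hJ2' hj hj' (by rw [hdj', hdj]; exact hdeq.symm)
    have hP3 : PIso n (pmap2 i1 i1' i2 i2') :=
      PIso_pmap2 hI1 hI1' hI2 hI2' h12 h12' hdeq.symm
    have hP4 : PIso n (pmap2 j1' j1 j2' j2) :=
      PIso_pmap2 hJ1' hJ1 hJ2' hJ2 hj' hj (by rw [hdj', hdj]; exact hdeq)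
    ext x
    simp only [Set.mem_setOf_eq]
    constructor
    · rintro ⟨c, d, hc, hd, rfl⟩
      refine ⟨pcomp c (pmap2 i1 i1' i2 i2'), pcomp (pmap2 j1' j1 j2' j2) d,
        PIso_pcomp hc hP3, PIso_pcomp hP4 hd, ?_⟩
      rw [← hab]
      simp [pcomp_assoc]
    · rintro ⟨c, d, hc, hd, rfl⟩
      refine ⟨pcomp c (pmap2 i1' i1 i2' i2), pcomp (pmap2 j1 j1' j2 j2') d,
        PIso_pcomp hc hP1, PIso_pcomp hP2 hd, ?_⟩
      rw [← hba]
      simp [pcomp_assoc]
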